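/- arXiv:1208.4383 — 4 statements merged into one kernel-verified Lean document; each statement's English description precedes it below -/
import Mathlib

section
/- A finite nilpotent semigroup of coclass r is generated by at most r+1 elements; that is, |S \ S^2| ≤ r + 1. -/
/-- `sgPow S i` is the set `Sⁱ` of all products of `i` elements of `S`
(with the convention `S⁰ = S¹ = S`). -/
def sgPow (S : Type*) [Mul S] : ℕ → Set S
  | 0 => Set.univ
  | 1 => Set.univ
  | n + 2 => Set.image2 (· * ·) (sgPow S (n + 1)) Set.univ

/-- A semigroup with zero is nilpotent of class `c` if `S^(c+1) = {0}` and `S^c ≠ {0}`. -/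
def IsNilpotentOfClass (S : Type*) [SemigroupWithZero S] (c : ℕ) : Prop :=
  sgPow S (c + 1) = {0} ∧ sgPow S c ≠ {0}

/-- `mpow x i` is the power `xⁱ` in a magma, for `i ≥ 1` (with `mpow x 0 = x` by convention). -/
def mpow {S : Type*} [Mul S] (x : S) : ℕ → S
  | 0 => x
  | 1 => x
  | n + 2 => mpow x (n + 1) * x

lemma sgPow_two_succ (S : Type*) [Mul S] (n : ℕ) :
    sgPow S (n + 2) = Set.image2 (· * ·) (sgPow S (n + 1)) Set.univ := rfl

lemma sgPow_succ_subset {S : Type*} [Semigroup S] : ∀ n, sgPow S (n + 1) ⊆ sgPow S n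
  | 0 => subset_refl _
  | 1 => Set.subset_univ _
  | (n + 2) => by
      rintro x hx
      obtain ⟨q, hq, s, -, rfl⟩ := hx
      obtain ⟨p, hp, t, -, rfl⟩ := hq
      exact ⟨p, hp, t * s, trivial, (mul_assoc p t s).symm⟩

lemma sgPow_anti {S : Type*} [Semigroup S] {n m : ℕ} (h : n ≤ m) :
    sgPow S m ⊆ sgPow S n := by
  induction m, h using Nat.le_induction with
  | base => exact subset_refl _
  | succ m hm ih => exact (sgPow_succ_subset m).trans ih

lemma sgPow_stab {S : Type*} [Semigroup S] {j : ℕ}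
    (h : sgPow S (j + 2) = sgPow S (j + 1)) :
    ∀ m, j + 1 ≤ m → sgPow S m = sgPow S (j + 1) := by
  intro m hm
  induction m, hm using Nat.le_induction with
  | base => rfl
  | succ m hm ih =>
      obtain ⟨k, rfl⟩ := Nat.exists_eq_add_of_le hm
      rw [show j + 1 + k + 1 = (j + k) + 2 by ring, sgPow_two_succ,
        show j + k + 1 = j + 1 + k by ring, ih, ← sgPow_two_succ, h]

/-- A finite nilpotent semigroup of coclass `r` is generated by at most `r + 1` elements:
its unique minimal generating set `S \ S²` has at most `r + 1` elements. -/
theorem statement2 {S : Type*} [SemigroupWithZero S] [Finite S] (c r : ℕ)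
    (hS : IsNilpotentOfClass S c) (hcc : Nat.card {s : S // s ≠ 0} = c + r) :
    {s : S | s ∉ sgPow S 2}.ncard ≤ r + 1 := by
  obtain ⟨h1, h2⟩ := hS
  -- c ≥ 1
  have hc1 : 1 ≤ c := by
    by_contra hc
    interval_cases c
    exact h2 h1
  -- 0 belongs to every sgPow S m for m ≤ c + 1
  have hzero : ∀ m, m ≤ c + 1 → (0 : S) ∈ sgPow S m := by
    intro m hm
    exact sgPow_anti hm (h1 ▸ rfl)
  -- the chain is strictly decreasing between 1 and c
  have hstrict : ∀ i, 1 ≤ i → i ≤ c → sgPow S (i + 1) ⊂ sgPow S i := by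
    intro i hi hic
    refine ⟨sgPow_succ_subset i, fun hsub => ?_⟩
    have heq : sgPow S (i + 1) = sgPow S i :=
      Set.Subset.antisymm (sgPow_succ_subset i) hsub
    obtain ⟨j, rfl⟩ := Nat.exists_eq_add_of_le hi
    have hst := sgPow_stab (S := S) (j := j) (by rw [Nat.add_comm 1 j] at heq; exact heq)
    have hc' : sgPow S c = sgPow S (j + 1) := hst c (by omega)
    have hc1' : sgPow S (c + 1) = sgPow S (j + 1) := hst (c + 1) (by omega)
    exact h2 (by rw [hc', ← hc1', h1])
  -- counting function
  set f : ℕ → ℕ := fun i => (sgPow S i \ {0}).ncard with hf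
  have hfdec : ∀ i, 1 ≤ i → i ≤ c → f (i + 1) < f i := by
    intro i hi hic
    apply Set.ncard_lt_ncard _ (Set.toFinite _)
    constructor
    · exact Set.diff_subset_diff_left (sgPow_succ_subset i)
    · intro hsub
      have : sgPow S i ⊆ sgPow S (i + 1) := by
        intro x hx
        rcases eq_or_ne x 0 with rfl | hx0
        · exact hzero (i + 1) (by omega)
        · exact (hsub ⟨hx, hx0⟩).1
      exact (hstrict i hi hic).2 this
  have hfcp1 : f (c + 1) = 0 := by
    simp only [hf, h1]
    simp
  have key : ∀ d, d ≤ c - 1 → d ≤ f (c + 1 - d) := by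
    intro d
    induction d with
    | zero => omega
    | succ d ih =>
        intro hd
        have h1d := ih (by omega)
        have hlt := hfdec (c - d) (by omega) (by omega)
        have e1 : c + 1 - d = c - d + 1 := by omega
        have e2 : c + 1 - (d + 1) = c - d := by omega
        rw [e1] at h1d
        rw [e2]
        omega
  have hf2 : c - 1 ≤ f 2 := by
    have := key (c - 1) le_rfl
    have h2' : c + 1 - (c - 1) = 2 := by omega
    rwa [h2'] at this
  -- final counting
  have hzero2 : (0 : S) ∈ sgPow S 2 := hzero 2 (by omega)
  have hN : {s : S | s ≠ 0}.ncard = c + r := by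
    rw [← Nat.card_coe_set_eq]
    exact hcc
  have hunion : {s : S | s ≠ 0} = {s : S | s ∉ sgPow S 2} ∪ (sgPow S 2 \ {0}) := by
    ext x
    simp only [Set.mem_setOf_eq, Set.mem_union, Set.mem_diff, Set.mem_singleton_iff]
    constructor
    · intro hx
      by_cases hx2 : x ∈ sgPow S 2
      · exact Or.inr ⟨hx2, hx⟩
      · exact Or.inl hx2
    · rintro (hx | ⟨-, hx⟩)
      · rintro rfl; exact hx hzero2
      · exact hx
  have hdisj : Disjoint {s : S | s ∉ sgPow S 2} (sgPow S 2 \ {0}) := by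
    rw [Set.disjoint_left]
    rintro x hx ⟨hx2, -⟩
    exact hx hx2
  have hcard : {s : S | s ∉ sgPow S 2}.ncard + f 2 = c + r := by
    rw [← hN, hunion]
    rw [Set.ncard_union_eq hdisj (Set.toFinite _) (Set.toFinite _)]
  omega
end

section
/- Let A be an associative non-unital algebra over a field K with dim(A^i/A^{i+1}) = 1 for all i ≥ 2. If v, w, x ∈ A are such that vwx spans A^3 modulo A^4, then x^i spans A^i modulo A^{i+1} for every i ≥ 2. -/
section AlgebraDefs

variable (K : Type*) [Field K] (A : Type*) [NonUnitalRing A] [Module K A]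
  [SMulCommClass K A A] [IsScalarTower K A A]

/-- `algPow K A i` is the submodule `Aⁱ` spanned by all products of `i` elements
(with `A⁰ = A¹ = A`). -/
def algPow : ℕ → Submodule K A
  | 0 => ⊤
  | 1 => ⊤
  | n + 2 => Submodule.span K (Set.image2 (· * ·) ((algPow (n + 1) : Submodule K A) : Set A) Set.univ)

/-- The dimension of the layer `Aⁱ/Aⁱ⁺¹`. -/
noncomputable def algLayerDim (i : ℕ) : ℕ :=
  Module.finrank K
    (↥(algPow K A i) ⧸ (algPow K A (i + 1)).comap (algPow K A i).subtype)

/-- The coclass of the nilpotent quotient `A/Aⁱ`, namely `dim (A/Aⁱ) - (i - 1)`. -/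
noncomputable def algCcQuot (i : ℕ) : ℕ :=
  Module.finrank K (A ⧸ algPow K A i) - (i - 1)

/-- A finitely generated residually nilpotent algebra has coclass `r` if the coclasses
of its nilpotent quotients `A/Aⁱ` converge to `r`. -/
def HasCoclassAlg (r : ℕ) : Prop :=
  ∀ᶠ i in Filter.atTop, algCcQuot K A i = r

/-- The two-sided annihilator of an algebra, as a submodule. -/
def twoSidedAnn : Submodule K A where
  carrier := {a | (∀ b, a * b = 0) ∧ ∀ b, b * a = 0}
  add_mem' := by
    intro a b ha hb
    exact ⟨fun c => by rw [add_mul, ha.1 c, hb.1 c, add_zero],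
           fun c => by rw [mul_add, ha.2 c, hb.2 c, add_zero]⟩
  zero_mem' := ⟨fun b => zero_mul b, fun b => mul_zero b⟩
  smul_mem' := by
    intro k a ha
    exact ⟨fun b => by rw [smul_mul_assoc, ha.1 b, smul_zero],
           fun b => by rw [mul_smul_comm, ha.2 b, smul_zero]⟩

/-- The right annihilator of an algebra, as a submodule. -/
def rightAnn : Submodule K A where
  carrier := {a | ∀ b, b * a = 0}
  add_mem' := by
    intro a b ha hb c
    rw [mul_add, ha c, hb c, add_zero]
  zero_mem' := fun b => mul_zero b
  smul_mem' := by
    intro k a ha b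
    rw [mul_smul_comm, ha b, smul_zero]

end AlgebraDefs

/-- `IsContractedAlgebra K f` asserts that `f : S → A` exhibits the algebra `A` as the
contracted semigroup algebra of the semigroup-with-zero `S` over the field `K`:
`f` is multiplicative, sends zero to zero, and the images of the non-zero elements
of `S` form a `K`-basis of `A`. -/
def IsContractedAlgebra (K : Type*) [Field K] {S A : Type*} [SemigroupWithZero S]
    [NonUnitalRing A] [Module K A] (f : S → A) : Prop :=
  f 0 = 0 ∧ (∀ s t : S, f (s * t) = f s * f t) ∧
  LinearIndependent K (fun s : {s : S // s ≠ 0} => f s.1) ∧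
  Submodule.span K (Set.range fun s : {s : S // s ≠ 0} => f s.1) = ⊤
section Aux
variable {K : Type*} [Field K] {A : Type*} [NonUnitalRing A] [Module K A]
  [SMulCommClass K A A] [IsScalarTower K A A]

lemma algPow_succ_eq (n : ℕ) : algPow K A (n+2) =
    Submodule.span K (Set.image2 (· * ·) ((algPow K A (n+1) : Submodule K A) : Set A) Set.univ) := rfl

lemma algPow_antitone : ∀ n, algPow K A (n+1) ≤ algPow K A n
  | 0 => le_top
  | 1 => le_top
  | n + 2 => by
    rw [algPow_succ_eq, algPow_succ_eq]
    exact Submodule.span_mono (Set.image2_subset (by exact_mod_cast algPow_antitone (n+1)) le_rfl)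

lemma mul_right_mem_algPow {i : ℕ} {a : A} (b : A) (ha : a ∈ algPow K A i) :
    a * b ∈ algPow K A (i + 1) := by
  cases i with
  | zero => exact Submodule.mem_top
  | succ n =>
    exact Submodule.subset_span (Set.mem_image2_of_mem ha (Set.mem_univ b))

lemma mul_mem_algPow : ∀ {j : ℕ}, 1 ≤ j → ∀ {i : ℕ} {a b : A}, a ∈ algPow K A i →
    b ∈ algPow K A j → a * b ∈ algPow K A (i + j)
  | 1, _, i, a, b, ha, _ => mul_right_mem_algPow b ha
  | (m+2), _, i, a, b, ha, hb => by
    induction hb using Submodule.span_induction with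
    | mem c hc =>
      obtain ⟨y, hy, z, -, rfl⟩ := hc
      rw [← mul_assoc]
      have : a * y ∈ algPow K A (i + (m+1)) := mul_mem_algPow (Nat.succ_le_succ (Nat.zero_le m)) ha hy
      simpa [← add_assoc] using mul_right_mem_algPow z this
    | zero => simp
    | add c d _ _ hc hd => simpa [mul_add] using add_mem hc hd
    | smul k c _ hc => simpa [mul_smul_comm] using Submodule.smul_mem _ k hc

lemma mpow_mem_algPow (x : A) : ∀ n, mpow x n ∈ algPow K A n
  | 0 => Submodule.mem_top
  | 1 => Submodule.mem_top
  | n + 2 => mul_right_mem_algPow x (mpow_mem_algPow x (n+1))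

lemma algPow_not_le (hdi : ∀ i, 2 ≤ i → algLayerDim K A i = 1) {i : ℕ} (hi : 2 ≤ i) :
    ¬ algPow K A i ≤ algPow K A (i + 1) := by
  intro hle
  have h1 := hdi i hi
  have htop : (algPow K A (i+1)).comap (algPow K A i).subtype = ⊤ := by
    rw [Submodule.eq_top_iff']
    exact fun ⟨a, ha⟩ => hle ha
  rw [algLayerDim, htop] at h1
  haveI : Subsingleton (↥(algPow K A i) ⧸ (⊤ : Submodule K ↥(algPow K A i))) :=
    Submodule.Quotient.subsingleton_iff.mpr rfl
  rw [Module.finrank_zero_of_subsingleton] at h1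
  exact absurd h1 (by norm_num)

lemma span_layer (hdi : ∀ i, 2 ≤ i → algLayerDim K A i = 1) {i : ℕ} (hi : 2 ≤ i)
    {u : A} (hu : u ∈ algPow K A i) (hu' : u ∉ algPow K A (i + 1)) :
    algPow K A i = algPow K A (i + 1) ⊔ Submodule.span K {u} := by
  set N := (algPow K A (i+1)).comap (algPow K A i).subtype with hN
  set q : ↥(algPow K A i) ⧸ N := Submodule.Quotient.mk ⟨u, hu⟩ with hq
  have hq0 : q ≠ 0 := by
    rw [hq, Ne, Submodule.Quotient.mk_eq_zero]
    exact hu'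
  have hspan : Submodule.span K {q} = ⊤ :=
    (finrank_eq_one_iff_of_nonzero q hq0).mp (hdi i hi)
  apply le_antisymm
  · intro a ha
    have : (Submodule.Quotient.mk ⟨a, ha⟩ : ↥(algPow K A i) ⧸ N) ∈ Submodule.span K {q} := by
      rw [hspan]; trivial
    obtain ⟨c, hc⟩ := Submodule.mem_span_singleton.mp this
    rw [hq, ← Submodule.Quotient.mk_smul, ← sub_eq_zero, ← Submodule.Quotient.mk_sub,
      Submodule.Quotient.mk_eq_zero] at hc
    have hc' : c • u - a ∈ algPow K A (i+1) := hc
    have : a = c • u - (c • u - a) := by abel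
    rw [this]
    exact Submodule.sub_mem _
      (Submodule.mem_sup_right (Submodule.smul_mem _ c (Submodule.mem_span_singleton_self u)))
      (Submodule.mem_sup_left hc')
  · exact sup_le (algPow_antitone i) ((Submodule.span_singleton_le_iff_mem u _).mpr hu)

end Aux

/-- Let `A` be an associative non-unital algebra over a field `K` with
`dim (Aⁱ/Aⁱ⁺¹) = 1` for all `i ≥ 2`. If `v, w, x ∈ A` are such that `v*w*x` spans `A³`
modulo `A⁴`, then `xⁱ` spans `Aⁱ` modulo `Aⁱ⁺¹` for every `i ≥ 2`. -/
theorem statement7 {K : Type*} [Field K] {A : Type*} [NonUnitalRing A] [Module K A]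
    [SMulCommClass K A A] [IsScalarTower K A A]
    (hdi : ∀ i, 2 ≤ i → algLayerDim K A i = 1)
    (v w x : A)
    (hvwx : algPow K A 3 = algPow K A 4 ⊔ Submodule.span K {v * w * x}) :
    ∀ i, 2 ≤ i → algPow K A i = algPow K A (i + 1) ⊔ Submodule.span K {mpow x i} := by
  have hnle3 := algPow_not_le hdi (i := 3) (by norm_num)
  have hvwx4 : v * w * x ∉ algPow K A 4 := by
    intro h
    exact hnle3 (by
      rw [hvwx]
      exact sup_le le_rfl ((Submodule.span_singleton_le_iff_mem _ _).mpr h))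
  have hv1 : v ∈ algPow K A 1 := Submodule.mem_top
  have hw1 : w ∈ algPow K A 1 := Submodule.mem_top
  have hx1 : x ∈ algPow K A 1 := Submodule.mem_top
  have hvw2 : v * w ∈ algPow K A 2 := mul_right_mem_algPow w hv1
  have hvw3 : v * w ∉ algPow K A 3 := fun h => hvwx4 (mul_right_mem_algPow x h)
  have h2 : algPow K A 2 = algPow K A 3 ⊔ Submodule.span K {v * w} :=
    span_layer hdi le_rfl hvw2 hvw3
  have hx2 : x * x ∈ algPow K A 2 := mul_right_mem_algPow x hx1
  have hx23 : x * x ∉ algPow K A 3 := by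
    intro h
    have hwx : w * x ∈ algPow K A 2 := mul_right_mem_algPow x hw1
    rw [h2] at hwx
    obtain ⟨t, ht, s, hs, hts⟩ := Submodule.mem_sup.mp hwx
    obtain ⟨μ, rfl⟩ := Submodule.mem_span_singleton.mp hs
    by_cases hμ : μ = 0
    · subst hμ
      rw [zero_smul, add_zero] at hts
      have : v * (w * x) ∈ algPow K A 4 := by
        rw [← hts]
        exact mul_mem_algPow (by norm_num) hv1 ht
      rw [← mul_assoc] at this
      exact hvwx4 this
    · have h1 : w * (x * x) ∈ algPow K A 4 := mul_mem_algPow (by norm_num) hw1 h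
      have h2' : t * x ∈ algPow K A 4 := mul_right_mem_algPow x ht
      have key : w * (x * x) - t * x = μ • (v * w * x) := by
        rw [← mul_assoc, ← hts, add_mul, smul_mul_assoc]
        abel
      have : μ • (v * w * x) ∈ algPow K A 4 := key ▸ sub_mem h1 h2'
      exact hvwx4 ((Submodule.smul_mem_iff _ hμ).mp this)
  have base : algPow K A 2 = algPow K A 3 ⊔ Submodule.span K {x * x} :=
    span_layer hdi le_rfl hx2 hx23
  intro i hi
  induction i, hi using Nat.le_induction with
  | base => simpa [mpow] using base
  | succ i hi ih =>
    obtain ⟨k, rfl⟩ : ∃ k, i = k + 2 := ⟨i - 2, by omega⟩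
    apply le_antisymm
    · show algPow K A (k + 3) ≤ _
      rw [algPow_succ_eq (k + 1)]
      rw [Submodule.span_le]
      rintro _ ⟨c, hc, d, -, rfl⟩
      rw [ih] at hc
      obtain ⟨t, ht, s, hs, hts⟩ := Submodule.mem_sup.mp hc
      obtain ⟨lam, rfl⟩ := Submodule.mem_span_singleton.mp hs
      have hxd : x * d ∈ algPow K A 2 := mul_right_mem_algPow d hx1
      rw [base] at hxd
      obtain ⟨t', ht', s', hs', hts'⟩ := Submodule.mem_sup.mp hxd
      obtain ⟨μ, rfl⟩ := Submodule.mem_span_singleton.mp hs'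
      have e2 : mpow x (k + 2) * d = mpow x (k + 1) * t' + μ • mpow x (k + 3) := by
        show (mpow x (k + 1) * x) * d = _
        rw [mul_assoc, ← hts', mul_add, mul_smul_comm]
        congr 1
        · congr 1
          show _ = (mpow x (k + 1) * x) * x
          rw [mul_assoc]
      have e1 : c * d = t * d + lam • (mpow x (k + 1) * t') + (lam * μ) • mpow x (k + 3) := by
        rw [← hts, add_mul, smul_mul_assoc, e2, smul_add, smul_smul]
        abel
      show c * d ∈ (algPow K A (k + 4) ⊔ Submodule.span K {mpow x (k + 3)} : Submodule K A)
      rw [e1]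
      refine add_mem (add_mem (Submodule.mem_sup_left (mul_right_mem_algPow d ht))
        (Submodule.mem_sup_left (Submodule.smul_mem _ _ ?_)))
        (Submodule.mem_sup_right (Submodule.smul_mem _ _ (Submodule.mem_span_singleton_self _)))
      have := mul_mem_algPow (j := 3) (by norm_num) (mpow_mem_algPow x (k + 1)) ht'
      show mpow x (k + 1) * t' ∈ algPow K A (k + 4)
      convert this using 2
    · exact sup_le (algPow_antitone _)
        ((Submodule.span_singleton_le_iff_mem _ _).mpr (mpow_mem_algPow x _))
end

section
/- For each n ≥ 5 and 2 ≤ k ≤ n-1, let H_k be the semigroup with zero presented by ⟨u, v | u^{n-1} = u^n, uv = u^k, vu = u^k, v^2 = u^{2k-2}⟩ (a nilpotent semigroup of order n, where u^{n-1} acts as zero). Then for any field K and any 3 ≤ k ≤ n-1, the contracted semigroup algebras K H_2 and K H_k are isomorphic as K-algebras; an isomorphism is induced by u ↦ u + u^{k-1}, v ↦ u + v. -/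
/-- `IsCC1Sg n a b c S u v` asserts that `S` is the nilpotent semigroup of order `n`
with zero given by the presentation
`⟨u, v ∣ u^(n-1) = u^n, u*v = u^a, v*u = u^b, v*v = u^c⟩`:
its distinct elements are `u, u², …, u^(n-2), v` and the zero `u^(n-1)`. -/
def IsCC1Sg (n a b c : ℕ) (S : Type*) [SemigroupWithZero S] (u v : S) : Prop :=
  mpow u (n - 1) = 0 ∧ u * v = mpow u a ∧ v * u = mpow u b ∧ v * v = mpow u c ∧
  v ≠ 0 ∧ (∀ i, 1 ≤ i → i ≤ n - 2 → mpow u i ≠ 0) ∧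
  (∀ i j, 1 ≤ i → i ≤ n - 2 → 1 ≤ j → j ≤ n - 2 → mpow u i = mpow u j → i = j) ∧
  (∀ i, 1 ≤ i → i ≤ n - 2 → v ≠ mpow u i) ∧
  (∀ s : S, s = 0 ∨ s = v ∨ ∃ i, 1 ≤ i ∧ i ≤ n - 2 ∧ s = mpow u i)
section Aux

lemma mpow_one' {M : Type*} [Mul M] (x : M) : mpow x 1 = x := rfl

lemma mpow_succ' {M : Type*} [Mul M] (x : M) {i : ℕ} (hi : 1 ≤ i) :
    mpow x (i + 1) = mpow x i * x := by
  cases i with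
  | zero => omega
  | succ j => rfl

lemma mpow_add' {M : Type*} [Semigroup M] (x : M) {i j : ℕ} (hi : 1 ≤ i) (hj : 1 ≤ j) :
    mpow x (i + j) = mpow x i * mpow x j := by
  induction j with
  | zero => omega
  | succ j ih =>
    rcases Nat.lt_or_ge j 1 with hj1 | hj1
    · interval_cases j
      rw [mpow_succ' x hi, mpow_one']
    · rw [show i + (j + 1) = (i + j) + 1 from rfl, mpow_succ' x (by omega),
        ih hj1, mpow_succ' x hj1, mul_assoc]

lemma aux_uv {S : Type*} [Semigroup S] {u v : S} {a : ℕ} (ha : 1 ≤ a) (h : u * v = mpow u a) :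
    ∀ j, 1 ≤ j → mpow u j * v = mpow u (j + a - 1) := by
  intro j hj
  induction j with
  | zero => omega
  | succ j ih =>
    rcases Nat.lt_or_ge j 1 with hj1 | hj1
    · interval_cases j
      rw [mpow_one', h]
      congr 1 <;> omega
    · rw [mpow_succ' u hj1, mul_assoc, h, ← mpow_add' u hj1 ha]
      congr 1 <;> omega

lemma aux_vu {S : Type*} [Semigroup S] {u v : S} {a : ℕ} (ha : 1 ≤ a) (h : v * u = mpow u a) :
    ∀ j, 1 ≤ j → v * mpow u j = mpow u (a + j - 1) := by
  intro j hj
  induction j with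
  | zero => omega
  | succ j ih =>
    rcases Nat.lt_or_ge j 1 with hj1 | hj1
    · interval_cases j
      rw [mpow_one', h]
      congr 1 <;> omega
    · rw [mpow_succ' u hj1, ← mul_assoc, ih hj1, ← mpow_succ' u (by omega)]
      congr 1 <;> omega

lemma mpow_zero_of_ge {S : Type*} [SemigroupWithZero S] {u : S} {m0 : ℕ} (h1 : 1 ≤ m0)
    (h : mpow u m0 = 0) : ∀ m, m0 ≤ m → mpow u m = 0 := by
  intro m hm
  rcases eq_or_lt_of_le hm with rfl | hlt
  · exact h
  · have : m = m0 + (m - m0) := by omega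
    rw [this, mpow_add' u h1 (by omega), h, zero_mul]

end Aux

/-- For `n ≥ 5` and `3 ≤ k ≤ n - 1`, the contracted semigroup algebras `K H₂` and `K Hₖ`
of the coclass-one semigroups
`H_k = ⟨u, v ∣ u^(n-1) = uⁿ, u*v = uᵏ, v*u = uᵏ, v² = u^(2k-2)⟩` of order `n`
are isomorphic, via an isomorphism induced by `u ↦ u + u^(k-1)`, `v ↦ u + v`. -/
theorem statement8 {K : Type*} [Field K] (n k : ℕ) (hn : 5 ≤ n) (hk1 : 3 ≤ k)
    (hk2 : k ≤ n - 1)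
    {S₂ : Type*} [SemigroupWithZero S₂] (u₂ v₂ : S₂)
    (h₂ : IsCC1Sg n 2 2 2 S₂ u₂ v₂)
    {Sₖ : Type*} [SemigroupWithZero Sₖ] (uₖ vₖ : Sₖ)
    (hₖ : IsCC1Sg n k k (2 * k - 2) Sₖ uₖ vₖ)
    {A : Type*} [NonUnitalRing A] [Module K A] [SMulCommClass K A A] [IsScalarTower K A A]
    {B : Type*} [NonUnitalRing B] [Module K B] [SMulCommClass K B B] [IsScalarTower K B B]
    (f : S₂ → A) (hf : IsContractedAlgebra K f)
    (g : Sₖ → B) (hg : IsContractedAlgebra K g) :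
    ∃ e : A →ₙₐ[K] B, Function.Bijective e ∧
      e (f u₂) = g uₖ + g (mpow uₖ (k - 1)) ∧ e (f v₂) = g uₖ + g vₖ := by
  classical
  obtain ⟨hf0, hfm, hfli, hfsp⟩ := hf
  obtain ⟨hg0, hgm, hgli, hgsp⟩ := hg
  obtain ⟨h2z, h2uv, h2vu, h2vv, h2v0, h2ne, h2inj, h2nv, h2cl⟩ := h₂
  obtain ⟨hkz, hkuv, hkvu, hkvv, hkv0, hkne, hkinj, hknv, hkcl⟩ := hₖ
  set b : ℕ → B := fun i => g (mpow uₖ i) with hb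
  set w : B := g vₖ with hw
  set c : B := b 1 + b (k - 1) with hc
  set d : B := b 1 + w with hd
  -- powers of uₖ vanish from n-1 on
  have hmzk : ∀ m, n - 1 ≤ m → mpow uₖ m = 0 := mpow_zero_of_ge (by omega) hkz
  have hbz : ∀ m, n - 1 ≤ m → b m = 0 := fun m hm => by
    show g (mpow uₖ m) = 0
    rw [hmzk m hm, hg0]
  have hbadd : ∀ i j : ℕ, 1 ≤ i → 1 ≤ j → b i * b j = b (i + j) := by
    intro i j hi hj
    show g (mpow uₖ i) * g (mpow uₖ j) = g (mpow uₖ (i + j))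
    rw [← hgm, ← mpow_add' uₖ hi hj]
  have hbw : ∀ j, 1 ≤ j → b j * w = b j * b (k - 1) := by
    intro j hj
    have h1 : mpow uₖ j * vₖ = mpow uₖ (j + k - 1) := aux_uv (by omega) hkuv j hj
    show g (mpow uₖ j) * g vₖ = g (mpow uₖ j) * g (mpow uₖ (k - 1))
    rw [← hgm, ← hgm, h1, ← mpow_add' uₖ hj (show 1 ≤ k - 1 by omega),
      show j + (k - 1) = j + k - 1 by omega]
  have hwb : ∀ j, 1 ≤ j → w * b j = b (k - 1) * b j := by
    intro j hj
    have h1 : vₖ * mpow uₖ j = mpow uₖ (k + j - 1) := aux_vu (by omega) hkvu j hj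
    show g vₖ * g (mpow uₖ j) = g (mpow uₖ (k - 1)) * g (mpow uₖ j)
    rw [← hgm, ← hgm, h1, ← mpow_add' uₖ (show 1 ≤ k - 1 by omega) hj,
      show k - 1 + j = k + j - 1 by omega]
  have hww : w * w = b (k - 1) * b (k - 1) := by
    show g vₖ * g vₖ = g (mpow uₖ (k - 1)) * g (mpow uₖ (k - 1))
    rw [← hgm, ← hgm, hkvv, ← mpow_add' uₖ (show 1 ≤ k - 1 by omega) (show 1 ≤ k - 1 by omega),
      show k - 1 + (k - 1) = 2 * k - 2 by omega]
  -- span filtration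
  set N : ℕ → Submodule K B := fun i => Submodule.span K {x : B | ∃ j, 1 ≤ j ∧ i ≤ j ∧ x = b j}
    with hN
  have hNspan : ∀ i, N i = Submodule.span K {x : B | ∃ j, 1 ≤ j ∧ i ≤ j ∧ x = b j} := fun i => rfl
  have hNb : ∀ i j, 1 ≤ j → i ≤ j → b j ∈ N i := fun i j h1 h2 =>
    Submodule.subset_span ⟨j, h1, h2, rfl⟩
  have hNmono : ∀ i i', i ≤ i' → N i' ≤ N i := by
    intro i i' h
    rw [hNspan, hNspan]
    apply Submodule.span_mono
    rintro x ⟨j, hj1, hj2, rfl⟩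
    exact ⟨j, hj1, le_trans h hj2, rfl⟩
  have hNzero : ∀ i, n - 1 ≤ i → N i = ⊥ := by
    intro i hi
    rw [hNspan, eq_bot_iff, Submodule.span_le]
    rintro x ⟨j, hj1, hj2, rfl⟩
    simp [hbz j (by omega)]
  have hNw : ∀ x ∈ N 1, x * w = x * b (k - 1) := by
    intro x hx
    have hker : N 1 ≤ LinearMap.ker (LinearMap.mulRight K (w - b (k - 1))) := by
      rw [hNspan, Submodule.span_le]
      rintro y ⟨j, hj1, _, rfl⟩
      simp only [SetLike.mem_coe, LinearMap.mem_ker, LinearMap.mulRight_apply]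
      rw [mul_sub, hbw j hj1, sub_self]
    have h1 := hker hx
    rw [LinearMap.mem_ker, LinearMap.mulRight_apply, mul_sub, sub_eq_zero] at h1
    exact h1
  have hNwl : ∀ x ∈ N 1, w * x = b (k - 1) * x := by
    intro x hx
    have hker : N 1 ≤ LinearMap.ker (LinearMap.mulLeft K w - LinearMap.mulLeft K (b (k - 1))) := by
      rw [hNspan, Submodule.span_le]
      rintro y ⟨j, hj1, _, rfl⟩
      simp only [SetLike.mem_coe, LinearMap.mem_ker, LinearMap.sub_apply,
        LinearMap.mulLeft_apply]
      rw [hwb j hj1, sub_self]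
    have h1 := hker hx
    rw [LinearMap.mem_ker, LinearMap.sub_apply, LinearMap.mulLeft_apply,
      LinearMap.mulLeft_apply, sub_eq_zero] at h1
    exact h1
  have hNc : ∀ i, ∀ x ∈ N i, x * c ∈ N (i + 1) := by
    intro i x hx
    rw [hNspan] at hx
    induction hx using Submodule.span_induction with
    | mem y hy =>
      obtain ⟨j, hj1, hj2, rfl⟩ := hy
      rw [hc, mul_add, hbadd j 1 hj1 le_rfl, hbadd j (k - 1) hj1 (by omega)]
      exact add_mem (hNb _ _ (by omega) (by omega)) (hNb _ _ (by omega) (by omega))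
    | zero => rw [zero_mul]; exact zero_mem _
    | add y z _ _ hy hz => rw [add_mul]; exact add_mem hy hz
    | smul a y _ hy => rw [smul_mul_assoc]; exact Submodule.smul_mem _ a hy
  have hkey : ∀ i, 1 ≤ i → mpow c i - b i ∈ N (i + 1) := by
    intro i hi
    induction i with
    | zero => omega
    | succ i ih =>
      rcases Nat.lt_or_ge i 1 with h1 | h1
      · interval_cases i
        show c - b 1 ∈ N 2
        rw [hc, add_sub_cancel_left]
        exact hNb 2 (k - 1) (by omega) (by omega)
      · have hstep : mpow c (i + 1) - b (i + 1) = (mpow c i - b i) * c + (b i * c - b (i + 1)) := by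
          rw [mpow_succ' c h1, sub_mul]
          abel
        have h2 : b i * c - b (i + 1) = b (i + (k - 1)) := by
          rw [hc, mul_add, hbadd i 1 h1 le_rfl, hbadd i (k - 1) h1 (by omega),
            add_sub_cancel_left]
        rw [hstep, h2]
        exact add_mem (hNc (i + 1) _ (ih h1)) (hNb _ _ (by omega) (by omega))
  have hcmem : ∀ i, 1 ≤ i → mpow c i ∈ N i := by
    intro i hi
    have h1 := hkey i hi
    have h2 : mpow c i = (mpow c i - b i) + b i := by abel
    rw [h2]
    exact add_mem (hNmono i (i + 1) (by omega) h1) (hNb i i hi le_rfl)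
  have hc0 : ∀ m, n - 1 ≤ m → mpow c m = 0 := by
    intro m hm
    have h1 := hcmem m (by omega)
    rw [hNzero m hm, Submodule.mem_bot] at h1
    exact h1
  -- S₂ relations
  have hmz2 : ∀ m, n - 1 ≤ m → mpow u₂ m = 0 := mpow_zero_of_ge (by omega) h2z
  have h2uv' : ∀ j, 1 ≤ j → mpow u₂ j * v₂ = mpow u₂ (j + 1) := by
    intro j hj
    have h1 := aux_uv (show (1:ℕ) ≤ 2 by omega) h2uv j hj
    rwa [show j + 2 - 1 = j + 1 by omega] at h1
  have h2vu' : ∀ j, 1 ≤ j → v₂ * mpow u₂ j = mpow u₂ (j + 1) := by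
    intro j hj
    have h1 := aux_vu (show (1:ℕ) ≤ 2 by omega) h2vu j hj
    rwa [show 2 + j - 1 = j + 1 by omega] at h1
  -- the map on semigroup elements
  set T : S₂ → B := fun s =>
    if s = v₂ then d
    else if h : ∃ i, 1 ≤ i ∧ i ≤ n - 2 ∧ s = mpow u₂ i then mpow c h.choose else 0 with hT
  have hT0 : T 0 = 0 := by
    show (if (0:S₂) = v₂ then d
      else if h : ∃ i, 1 ≤ i ∧ i ≤ n - 2 ∧ (0:S₂) = mpow u₂ i then mpow c h.choose else 0) = 0
    rw [if_neg (fun h => h2v0 h.symm), dif_neg]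
    rintro ⟨i, hi1, hi2, hi3⟩
    exact h2ne i hi1 hi2 hi3.symm
  have hTv : T v₂ = d := by
    show (if v₂ = v₂ then d else _) = d
    rw [if_pos rfl]
  have hTu : ∀ i, 1 ≤ i → i ≤ n - 2 → T (mpow u₂ i) = mpow c i := by
    intro i hi1 hi2
    show (if mpow u₂ i = v₂ then d
      else if h : ∃ j, 1 ≤ j ∧ j ≤ n - 2 ∧ mpow u₂ i = mpow u₂ j then mpow c h.choose else 0)
      = mpow c i
    have hex : ∃ j, 1 ≤ j ∧ j ≤ n - 2 ∧ mpow u₂ i = mpow u₂ j := ⟨i, hi1, hi2, rfl⟩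
    rw [if_neg (fun h => h2nv i hi1 hi2 h.symm), dif_pos hex]
    obtain ⟨hj1, hj2, hj3⟩ := hex.choose_spec
    rw [h2inj hex.choose i hj1 hj2 hi1 hi2 hj3.symm]
  have hTu' : ∀ m, 1 ≤ m → T (mpow u₂ m) = mpow c m := by
    intro m hm
    rcases le_or_gt m (n - 2) with h | h
    · exact hTu m hm h
    · rw [hmz2 m (by omega), hT0, hc0 m (by omega)]
  -- multiplicativity of T on nonzero elements
  have hTmul : ∀ s t : S₂, s ≠ 0 → t ≠ 0 → T (s * t) = T s * T t := by
    intro s t hs ht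
    rcases h2cl s with rfl | hsv | ⟨i, hi1, hi2, rfl⟩
    · exact absurd rfl hs
    · subst hsv
      rcases h2cl t with rfl | htv | ⟨j, hj1, hj2, rfl⟩
      · exact absurd rfl ht
      · subst htv
        rw [h2vv, hTu' 2 (by omega), hTv]
        have e1 : mpow c 2 = c * c := by
          rw [show (2:ℕ) = 1 + 1 from rfl, mpow_add' c le_rfl le_rfl, mpow_one']
        rw [e1, hd, hc, add_mul, add_mul, mul_add, mul_add, mul_add, mul_add,
          hbw 1 le_rfl, hwb 1 le_rfl, hww]
      · rw [h2vu' j hj1, hTu' (j + 1) (by omega), hTv, hTu j hj1 hj2]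
        have hz : mpow c j ∈ N 1 := hNmono 1 j hj1 (hcmem j hj1)
        rw [show j + 1 = 1 + j by omega, mpow_add' c le_rfl hj1, mpow_one', hd, hc,
          add_mul, add_mul, hNwl _ hz]
    · rcases h2cl t with rfl | htv | ⟨j, hj1, hj2, rfl⟩
      · exact absurd rfl ht
      · subst htv
        rw [h2uv' i hi1, hTu' (i + 1) (by omega), hTv, hTu i hi1 hi2]
        have hz : mpow c i ∈ N 1 := hNmono 1 i hi1 (hcmem i hi1)
        rw [mpow_succ' c hi1, hd, hc, mul_add, mul_add, hNw _ hz]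
      · rw [← mpow_add' u₂ hi1 hj1, hTu' (i + j) (by omega), hTu i hi1 hi2, hTu j hj1 hj2,
          mpow_add' c hi1 hj1]
  -- the linear map
  have hAspan : ⊤ ≤ Submodule.span K (Set.range fun s : {s : S₂ // s ≠ 0} => f s.1) := hfsp.ge
  set 𝒜 : Module.Basis {s : S₂ // s ≠ 0} K A := Module.Basis.mk hfli hAspan with hA
  set lin : A →ₗ[K] B := 𝒜.constr K (fun s => T s.1) with hlin
  have hlinf : ∀ s : S₂, lin (f s) = T s := by
    intro s
    by_cases hs : s = 0
    · subst hs
      rw [hf0, map_zero, hT0]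
    · have h1 : f s = 𝒜 ⟨s, hs⟩ := (Module.Basis.mk_apply hfli hAspan ⟨s, hs⟩).symm
      rw [h1, hlin, hA, Module.Basis.constr_basis]
  have hlinmul : ∀ x y : A, lin (x * y) = lin x * lin y := by
    have key : ∀ x ∈ Submodule.span K (Set.range fun s : {s : S₂ // s ≠ 0} => f s.1),
        ∀ y ∈ Submodule.span K (Set.range fun s : {s : S₂ // s ≠ 0} => f s.1),
        lin (x * y) = lin x * lin y := by
      intro x hx
      induction hx using Submodule.span_induction with
      | mem x hxm =>
        intro y hy
        induction hy using Submodule.span_induction with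
        | mem y hym =>
          obtain ⟨s, rfl⟩ := hxm
          obtain ⟨t, rfl⟩ := hym
          rw [← hfm, hlinf, hlinf, hlinf, hTmul s.1 t.1 s.2 t.2]
        | zero => rw [mul_zero, map_zero, mul_zero]
        | add y z _ _ ihy ihz => rw [mul_add, map_add, map_add, mul_add, ihy, ihz]
        | smul a y _ ih => rw [mul_smul_comm, map_smul, map_smul, mul_smul_comm, ih]
      | zero => intro y _; rw [zero_mul, map_zero, zero_mul]
      | add x z _ _ ihx ihz => intro y hy; rw [add_mul, map_add, map_add, add_mul, ihx y hy, ihz y hy]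
      | smul a x _ ih => intro y hy; rw [smul_mul_assoc, map_smul, map_smul, smul_mul_assoc, ih y hy]
    intro x y
    exact key x (by rw [hfsp]; trivial) y (by rw [hfsp]; trivial)
  -- surjectivity
  have hbrange : ∀ (i : ℕ) (j : ℕ), 1 ≤ j → n - 1 ≤ j + i → b j ∈ LinearMap.range lin := by
    intro i
    induction i with
    | zero =>
      intro j hj hnj
      rw [hbz j (by omega)]
      exact zero_mem _
    | succ i ih =>
      intro j hj hnj
      rcases le_or_gt (n - 1) (j + i) with h | h
      · exact ih j hj h
      · have hjle : j ≤ n - 2 := by omega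
        have h1 : mpow c j ∈ LinearMap.range lin :=
          ⟨f (mpow u₂ j), by rw [hlinf, hTu j hj hjle]⟩
        have h2 : N (j + 1) ≤ LinearMap.range lin := by
          rw [hNspan, Submodule.span_le]
          rintro x ⟨l, hl1, hl2, rfl⟩
          exact ih l hl1 (by omega)
        have h3 := h2 (hkey j hj)
        have h4 : b j = mpow c j - (mpow c j - b j) := by abel
        rw [h4]
        exact sub_mem h1 h3
  have hdrange : d ∈ LinearMap.range lin := ⟨f v₂, by rw [hlinf, hTv]⟩
  have hsurj : Function.Surjective lin := by
    rw [← LinearMap.range_eq_top, eq_top_iff, ← hgsp, Submodule.span_le]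
    rintro x ⟨t, rfl⟩
    rcases hkcl t.1 with h0 | hv | ⟨i, hi1, hi2, hi3⟩
    · exact absurd h0 t.2
    · show g t.1 ∈ LinearMap.range lin
      have h1 : g t.1 = d - b 1 := by rw [hv, hd, hw, add_sub_cancel_left]
      rw [h1]
      exact sub_mem hdrange (hbrange n 1 le_rfl (by omega))
    · show g t.1 ∈ LinearMap.range lin
      rw [hi3]
      exact hbrange n i hi1 (by omega)
  -- equivs and dimensions
  let φA : Fin (n - 2) ⊕ Unit → {s : S₂ // s ≠ 0} := fun x =>
    Sum.elim (fun i : Fin (n - 2) =>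
      ⟨mpow u₂ (i.1 + 1), h2ne (i.1 + 1) (by omega) (by have := i.isLt; omega)⟩)
      (fun _ => ⟨v₂, h2v0⟩) x
  have hφA : Function.Bijective φA := by
    constructor
    · rintro (i | ⟨⟩) (j | ⟨⟩) h
      · have h' : mpow u₂ (i.1 + 1) = mpow u₂ (j.1 + 1) := congrArg Subtype.val h
        have h2 := h2inj (i.1 + 1) (j.1 + 1) (by omega) (by have := i.isLt; omega)
          (by omega) (by have := j.isLt; omega) h'
        exact congrArg Sum.inl (Fin.ext (by omega))
      · exact absurd (congrArg Subtype.val h).symm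
          (h2nv (i.1 + 1) (by omega) (by have := i.isLt; omega))
      · exact absurd (congrArg Subtype.val h)
          (h2nv (j.1 + 1) (by omega) (by have := j.isLt; omega))
      · rfl
    · rintro ⟨s, hs⟩
      rcases h2cl s with rfl | hsv | ⟨i, hi1, hi2, hi3⟩
      · exact absurd rfl hs
      · exact ⟨Sum.inr (), Subtype.ext hsv.symm⟩
      · refine ⟨Sum.inl ⟨i - 1, by omega⟩, Subtype.ext ?_⟩
        show mpow u₂ (i - 1 + 1) = s
        rw [show i - 1 + 1 = i by omega]
        exact hi3.symm
  let φB : Fin (n - 2) ⊕ Unit → {t : Sₖ // t ≠ 0} := fun x =>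
    Sum.elim (fun i : Fin (n - 2) =>
      ⟨mpow uₖ (i.1 + 1), hkne (i.1 + 1) (by omega) (by have := i.isLt; omega)⟩)
      (fun _ => ⟨vₖ, hkv0⟩) x
  have hφB : Function.Bijective φB := by
    constructor
    · rintro (i | ⟨⟩) (j | ⟨⟩) h
      · have h' : mpow uₖ (i.1 + 1) = mpow uₖ (j.1 + 1) := congrArg Subtype.val h
        have h2 := hkinj (i.1 + 1) (j.1 + 1) (by omega) (by have := i.isLt; omega)
          (by omega) (by have := j.isLt; omega) h'
        exact congrArg Sum.inl (Fin.ext (by omega))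
      · exact absurd (congrArg Subtype.val h).symm
          (hknv (i.1 + 1) (by omega) (by have := i.isLt; omega))
      · exact absurd (congrArg Subtype.val h)
          (hknv (j.1 + 1) (by omega) (by have := j.isLt; omega))
      · rfl
    · rintro ⟨s, hs⟩
      rcases hkcl s with rfl | hsv | ⟨i, hi1, hi2, hi3⟩
      · exact absurd rfl hs
      · exact ⟨Sum.inr (), Subtype.ext hsv.symm⟩
      · refine ⟨Sum.inl ⟨i - 1, by omega⟩, Subtype.ext ?_⟩
        show mpow uₖ (i - 1 + 1) = s
        rw [show i - 1 + 1 = i by omega]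
        exact hi3.symm
  let ℬ : Module.Basis {t : Sₖ // t ≠ 0} K B := Module.Basis.mk hgli hgsp.ge
  have hfinA : Finite {s : S₂ // s ≠ 0} := Finite.of_surjective φA hφA.surjective
  have hfinB : Finite {t : Sₖ // t ≠ 0} := Finite.of_surjective φB hφB.surjective
  have hFDA : FiniteDimensional K A := Module.Finite.of_basis 𝒜
  have hFDB : FiniteDimensional K B := Module.Finite.of_basis ℬ
  have hrank : Module.finrank K A = Module.finrank K B := by
    rw [Module.finrank_eq_nat_card_basis 𝒜, Module.finrank_eq_nat_card_basis ℬ,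
      ← Nat.card_congr (Equiv.ofBijective φA hφA), ← Nat.card_congr (Equiv.ofBijective φB hφB)]
  have hinj : Function.Injective lin :=
    (LinearMap.injective_iff_surjective_of_finrank_eq_finrank hrank).mpr hsurj
  -- assemble
  refine ⟨{ toFun := lin
            map_smul' := fun m x => lin.map_smul m x
            map_zero' := lin.map_zero
            map_add' := lin.map_add
            map_mul' := hlinmul }, ⟨hinj, hsurj⟩, ?_, ?_⟩
  · show lin (f u₂) = g uₖ + g (mpow uₖ (k - 1))
    have h1 : f u₂ = f (mpow u₂ 1) := rfl
    rw [h1, hlinf, hTu 1 le_rfl (by omega), mpow_one', hc]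
    rfl
  · show lin (f v₂) = g uₖ + g vₖ
    rw [hlinf, hTv, hd]
    rfl
end

section
/- For n ≥ 5 and n/2 < k < n-1, let J_k = ⟨u, v | u^{n-1} = u^n, uv = u^k, vu = u^k, v^2 = u^{n-2}⟩ be the nilpotent semigroup of order n with zero u^{n-1}. Then for any field K, K J_{n-1} ≅ K J_k, via the map induced by u ↦ u, v ↦ v - u^{k-1}. -/
section MyAux

lemma my_mpow_one {S : Type*} [Mul S] (x : S) : mpow x 1 = x := rfl

lemma my_mpow_succ {S : Type*} [Mul S] (x : S) :
    ∀ a, 1 ≤ a → mpow x (a + 1) = mpow x a * x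
  | _ + 1, _ => rfl

lemma my_mpow_add {S : Type*} [Semigroup S] (x : S) (a : ℕ) (ha : 1 ≤ a) :
    ∀ b, 1 ≤ b → mpow x (a + b) = mpow x a * mpow x b := by
  intro b
  induction b with
  | zero => omega
  | succ m ih =>
    intro _
    rcases Nat.eq_zero_or_pos m with hm | hm
    · subst hm
      exact my_mpow_succ x a ha
    · have h1 : a + (m + 1) = (a + m) + 1 := by ring
      rw [h1, my_mpow_succ x (a + m) (by omega), ih hm, mul_assoc,
        ← my_mpow_succ x m hm]

lemma my_mpow_zero_of_ge {S : Type*} [SemigroupWithZero S] (u : S) (N : ℕ) (hN : 1 ≤ N)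
    (hz : mpow u N = 0) : ∀ m, N ≤ m → mpow u m = 0 := by
  intro m hm
  rcases Nat.eq_or_lt_of_le hm with h | h
  · rwa [← h]
  · have h1 : m = N + (m - N) := by omega
    rw [h1, my_mpow_add u N hN (m - N) (by omega), hz, zero_mul]

/-- In a semigroup with `u * v = mpow u a`, we have `uᵐ * v = u^(m-1+a)`. -/
lemma my_upow_mul_v {S : Type*} [Semigroup S] (u v : S) (a : ℕ) (ha : 1 ≤ a)
    (huv : u * v = mpow u a) : ∀ m, 1 ≤ m → mpow u m * v = mpow u ((m - 1) + a) := by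
  rintro (_ | r) hm
  · omega
  rcases Nat.eq_zero_or_pos r with hr | hr
  · subst hr
    simpa [my_mpow_one] using huv
  · rw [my_mpow_succ u r hr, mul_assoc, huv, ← my_mpow_add u r hr a ha]
    exact congrArg (mpow u) (by omega)

/-- In a semigroup with `v * u = mpow u b`, we have `v * uᵐ = u^(b+(m-1))`. -/
lemma my_v_mul_upow {S : Type*} [Semigroup S] (u v : S) (b : ℕ) (hb : 1 ≤ b)
    (hvu : v * u = mpow u b) : ∀ m, 1 ≤ m → v * mpow u m = mpow u (b + (m - 1)) := by
  rintro (_ | r) hm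
  · omega
  rcases Nat.eq_zero_or_pos r with hr | hr
  · subst hr
    simpa [my_mpow_one] using hvu
  · have h1 : r + 1 = 1 + r := by ring
    rw [h1, my_mpow_add u 1 le_rfl r hr, my_mpow_one, ← mul_assoc, hvu,
      ← my_mpow_add u b hb r hr]
    exact congrArg (mpow u) (by omega)

end MyAux

/-- For `n ≥ 5` and `n/2 < k < n - 1`, the contracted semigroup algebras `K J_(n-1)` and
`K J_k` of the coclass-one semigroups
`J_k = ⟨u, v ∣ u^(n-1) = uⁿ, u*v = uᵏ, v*u = uᵏ, v² = u^(n-2)⟩` of order `n`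
are isomorphic, via the map induced by `u ↦ u`, `v ↦ v - u^(k-1)`. -/
theorem statement9 {K : Type*} [Field K] (n k : ℕ) (hn : 5 ≤ n) (hk1 : n < 2 * k)
    (hk2 : k < n - 1)
    {S' : Type*} [SemigroupWithZero S'] (u' v' : S')
    (h' : IsCC1Sg n (n - 1) (n - 1) (n - 2) S' u' v')
    {Sₖ : Type*} [SemigroupWithZero Sₖ] (uₖ vₖ : Sₖ)
    (hₖ : IsCC1Sg n k k (n - 2) Sₖ uₖ vₖ)
    {A : Type*} [NonUnitalRing A] [Module K A] [SMulCommClass K A A] [IsScalarTower K A A]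
    {B : Type*} [NonUnitalRing B] [Module K B] [SMulCommClass K B B] [IsScalarTower K B B]
    (f : S' → A) (hf : IsContractedAlgebra K f)
    (g : Sₖ → B) (hg : IsContractedAlgebra K g) :
    ∃ e : A →ₙₐ[K] B, Function.Bijective e ∧
      e (f u') = g uₖ ∧ e (f v') = g vₖ - g (mpow uₖ (k - 1)) := by
  classical
  obtain ⟨h'z, h'uv, h'vu, h'vv, h'vne, h'upne, h'uinj, h'vnu, h'class⟩ := h'
  obtain ⟨hkz, hkuv, hkvu, hkvv, hkvne, hkupne, hkuinj, hkvnu, hkclass⟩ := hₖ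
  obtain ⟨hf0, hfm, hfli, hfsp⟩ := hf
  obtain ⟨hg0, hgm, hgli, hgsp⟩ := hg
  have hk3 : 3 ≤ k := by omega
  have hA0 : ∀ m, n - 1 ≤ m → mpow u' m = 0 :=
    my_mpow_zero_of_ge u' (n - 1) (by omega) h'z
  have hB0 : ∀ m, n - 1 ≤ m → mpow uₖ m = 0 :=
    my_mpow_zero_of_ge uₖ (n - 1) (by omega) hkz
  have hA_uv : ∀ m, 1 ≤ m → mpow u' m * v' = mpow u' ((m - 1) + (n - 1)) :=
    my_upow_mul_v u' v' (n - 1) (by omega) h'uv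
  have hA_vu : ∀ m, 1 ≤ m → v' * mpow u' m = mpow u' ((n - 1) + (m - 1)) :=
    my_v_mul_upow u' v' (n - 1) (by omega) h'vu
  have hB_uv : ∀ m, 1 ≤ m → mpow uₖ m * vₖ = mpow uₖ ((m - 1) + k) :=
    my_upow_mul_v uₖ vₖ k (by omega) hkuv
  have hB_vu : ∀ m, 1 ≤ m → vₖ * mpow uₖ m = mpow uₖ (k + (m - 1)) :=
    my_v_mul_upow uₖ vₖ k (by omega) hkvu
  -- index equivalences
  let eIA : Option (Fin (n - 2)) → {s : S' // s ≠ 0} := fun i =>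
    match i with
    | none => ⟨v', h'vne⟩
    | some j => ⟨mpow u' (j.1 + 1), h'upne _ (Nat.le_add_left 1 j.1) j.isLt⟩
  let eIB : Option (Fin (n - 2)) → {s : Sₖ // s ≠ 0} := fun i =>
    match i with
    | none => ⟨vₖ, hkvne⟩
    | some j => ⟨mpow uₖ (j.1 + 1), hkupne _ (Nat.le_add_left 1 j.1) j.isLt⟩
  have heIA : Function.Bijective eIA := by
    constructor
    · rintro (_ | i) (_ | j) h
      · rfl
      · exact absurd (congrArg Subtype.val h) (h'vnu (j.1 + 1) (by omega) j.isLt)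
      · exact absurd (congrArg Subtype.val h).symm (h'vnu (i.1 + 1) (by omega) i.isLt)
      · have := h'uinj (i.1 + 1) (j.1 + 1) (by omega) i.isLt (by omega)
          j.isLt (congrArg Subtype.val h)
        have hij : i = j := Fin.ext (by omega)
        rw [hij]
    · rintro ⟨s, hs⟩
      rcases h'class s with h0 | hv | ⟨i, hi1, hi2, hiu⟩
      · exact absurd h0 hs
      · exact ⟨none, by simp [eIA, hv]⟩
      · refine ⟨some ⟨i - 1, by omega⟩, ?_⟩
        apply Subtype.ext
        show mpow u' (i - 1 + 1) = s
        rw [show i - 1 + 1 = i by omega, hiu]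
  have heIB : Function.Bijective eIB := by
    constructor
    · rintro (_ | i) (_ | j) h
      · rfl
      · exact absurd (congrArg Subtype.val h) (hkvnu (j.1 + 1) (by omega) j.isLt)
      · exact absurd (congrArg Subtype.val h).symm (hkvnu (i.1 + 1) (by omega) i.isLt)
      · have := hkuinj (i.1 + 1) (j.1 + 1) (by omega) i.isLt (by omega)
          j.isLt (congrArg Subtype.val h)
        have hij : i = j := Fin.ext (by omega)
        rw [hij]
    · rintro ⟨s, hs⟩
      rcases hkclass s with h0 | hv | ⟨i, hi1, hi2, hiu⟩
      · exact absurd h0 hs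
      · exact ⟨none, by simp [eIB, hv]⟩
      · refine ⟨some ⟨i - 1, by omega⟩, ?_⟩
        apply Subtype.ext
        show mpow uₖ (i - 1 + 1) = s
        rw [show i - 1 + 1 = i by omega, hiu]
  -- bases
  let b0A : Module.Basis {s : S' // s ≠ 0} K A := Module.Basis.mk hfli hfsp.ge
  let b0B : Module.Basis {s : Sₖ // s ≠ 0} K B := Module.Basis.mk hgli hgsp.ge
  let bA : Module.Basis (Option (Fin (n - 2))) K A :=
    b0A.reindex (Equiv.ofBijective eIA heIA).symm
  let bB : Module.Basis (Option (Fin (n - 2))) K B :=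
    b0B.reindex (Equiv.ofBijective eIB heIB).symm
  have hbA : ∀ i, bA i = f (eIA i).1 := by
    intro i
    simp [bA, Module.Basis.reindex_apply, b0A, Module.Basis.mk_apply, Equiv.ofBijective]
  have hbB : ∀ i, bB i = g (eIB i).1 := by
    intro i
    simp [bB, Module.Basis.reindex_apply, b0B, Module.Basis.mk_apply, Equiv.ofBijective]
  -- the maps
  let TB : Option (Fin (n - 2)) → B := fun i =>
    match i with
    | none => g vₖ - g (mpow uₖ (k - 1))
    | some j => g (mpow uₖ (j.1 + 1))
  let TA : Option (Fin (n - 2)) → A := fun i =>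
    match i with
    | none => f v' + f (mpow u' (k - 1))
    | some j => f (mpow u' (j.1 + 1))
  let φ : A →ₗ[K] B := bA.constr K TB
  let ψ : B →ₗ[K] A := bB.constr K TA
  have hφbA : ∀ i, φ (bA i) = TB i := fun i => bA.constr_basis K TB i
  have hψbB : ∀ i, ψ (bB i) = TA i := fun i => bB.constr_basis K TA i
  have hφu : ∀ m, 1 ≤ m → φ (f (mpow u' m)) = g (mpow uₖ m) := by
    intro m hm
    rcases le_or_gt m (n - 2) with hle | hlt
    · have h1 : f (mpow u' m) = bA (some ⟨m - 1, by omega⟩) := by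
        rw [hbA]
        show f (mpow u' m) = f (mpow u' (m - 1 + 1))
        rw [show m - 1 + 1 = m by omega]
      rw [h1, hφbA]
      show g (mpow uₖ (m - 1 + 1)) = g (mpow uₖ m)
      rw [show m - 1 + 1 = m by omega]
    · rw [hA0 m (by omega), hB0 m (by omega), hf0, hg0, map_zero]
  have hψu : ∀ m, 1 ≤ m → ψ (g (mpow uₖ m)) = f (mpow u' m) := by
    intro m hm
    rcases le_or_gt m (n - 2) with hle | hlt
    · have h1 : g (mpow uₖ m) = bB (some ⟨m - 1, by omega⟩) := by
        rw [hbB]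
        show g (mpow uₖ m) = g (mpow uₖ (m - 1 + 1))
        rw [show m - 1 + 1 = m by omega]
      rw [h1, hψbB]
      show f (mpow u' (m - 1 + 1)) = f (mpow u' m)
      rw [show m - 1 + 1 = m by omega]
    · rw [hA0 m (by omega), hB0 m (by omega), hf0, hg0, map_zero]
  have hfvA : f v' = bA none := by rw [hbA]
  have hgvB : g vₖ = bB none := by rw [hbB]
  have hφv : φ (f v') = g vₖ - g (mpow uₖ (k - 1)) := by
    rw [hfvA, hφbA]
  have hψv : ψ (g vₖ) = f v' + f (mpow u' (k - 1)) := by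
    rw [hgvB, hψbB]
  -- multiplicativity
  have key : ∀ i j, φ (bA i * bA j) = φ (bA i) * φ (bA j) := by
    rintro (_ | i) (_ | j) <;> simp only [hφbA] <;> simp only [hbA]
    · -- v * v
      show φ (f v' * f v') = (g vₖ - g (mpow uₖ (k - 1))) * (g vₖ - g (mpow uₖ (k - 1)))
      rw [← hfm, h'vv, hφu (n - 2) (by omega)]
      rw [sub_mul, mul_sub, mul_sub, ← hgm, ← hgm, ← hgm, ← hgm, hkvv,
        hB_uv (k - 1) (by omega), hB_vu (k - 1) (by omega),
        ← my_mpow_add uₖ (k - 1) (by omega) (k - 1) (by omega)]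
      rw [hB0 (k - 1 - 1 + k) (by omega), hB0 (k + (k - 1 - 1)) (by omega),
        hB0 ((k - 1) + (k - 1)) (by omega), hg0]
      simp
    · -- v * u^{j+1}
      show φ (f v' * f (mpow u' (j.1 + 1))) =
        (g vₖ - g (mpow uₖ (k - 1))) * g (mpow uₖ (j.1 + 1))
      rw [← hfm, hA_vu (j.1 + 1) (by omega), hA0 _ (by omega), hf0, map_zero]
      rw [sub_mul, ← hgm, ← hgm, hB_vu (j.1 + 1) (by omega),
        ← my_mpow_add uₖ (k - 1) (by omega) (j.1 + 1) (by omega)]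
      rw [show k + (j.1 + 1 - 1) = (k - 1) + (j.1 + 1) by omega, sub_self]
    · -- u^{i+1} * v
      show φ (f (mpow u' (i.1 + 1)) * f v') =
        g (mpow uₖ (i.1 + 1)) * (g vₖ - g (mpow uₖ (k - 1)))
      rw [← hfm, hA_uv (i.1 + 1) (by omega), hA0 _ (by omega), hf0, map_zero]
      rw [mul_sub, ← hgm, ← hgm, hB_uv (i.1 + 1) (by omega),
        ← my_mpow_add uₖ (i.1 + 1) (by omega) (k - 1) (by omega)]
      rw [show i.1 + 1 - 1 + k = (i.1 + 1) + (k - 1) by omega, sub_self]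
    · -- u^{i+1} * u^{j+1}
      show φ (f (mpow u' (i.1 + 1)) * f (mpow u' (j.1 + 1))) =
        g (mpow uₖ (i.1 + 1)) * g (mpow uₖ (j.1 + 1))
      rw [← hfm, ← my_mpow_add u' (i.1 + 1) (by omega) (j.1 + 1) (by omega),
        hφu _ (by omega), ← hgm,
        ← my_mpow_add uₖ (i.1 + 1) (by omega) (j.1 + 1) (by omega)]
  have step1 : ∀ j x, φ (x * bA j) = φ x * φ (bA j) := by
    intro j
    have h1 : φ.comp (LinearMap.mulRight K (bA j)) =
        (LinearMap.mulRight K (φ (bA j))).comp φ := by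
      apply Module.Basis.ext bA
      intro i
      simpa using key i j
    intro x
    simpa using LinearMap.congr_fun h1 x
  have hmul : ∀ x y : A, φ (x * y) = φ x * φ y := by
    intro x
    have h1 : φ.comp (LinearMap.mulLeft K x) =
        (LinearMap.mulLeft K (φ x)).comp φ := by
      apply Module.Basis.ext bA
      intro j
      simpa using step1 j x
    intro y
    simpa using LinearMap.congr_fun h1 y
  -- inverse
  have left : ∀ x, ψ (φ x) = x := by
    have h1 : ψ.comp φ = LinearMap.id := by
      apply Module.Basis.ext bA
      intro i
      rcases i with _ | j
      · simp only [LinearMap.comp_apply, LinearMap.id_apply]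
        rw [hφbA]
        show ψ (g vₖ - g (mpow uₖ (k - 1))) = bA none
        rw [map_sub, hψv, hψu (k - 1) (by omega), add_sub_cancel_right, hfvA]
      · simp only [LinearMap.comp_apply, LinearMap.id_apply]
        rw [hφbA]
        show ψ (g (mpow uₖ (j.1 + 1))) = bA (some j)
        rw [hψu (j.1 + 1) (by omega), hbA]
    intro x
    exact LinearMap.congr_fun h1 x
  have right : ∀ y, φ (ψ y) = y := by
    have h1 : φ.comp ψ = LinearMap.id := by
      apply Module.Basis.ext bB
      intro i
      rcases i with _ | j
      · simp only [LinearMap.comp_apply, LinearMap.id_apply]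
        rw [hψbB]
        show φ (f v' + f (mpow u' (k - 1))) = bB none
        rw [map_add, hφv, hφu (k - 1) (by omega), sub_add_cancel, hgvB]
      · simp only [LinearMap.comp_apply, LinearMap.id_apply]
        rw [hψbB]
        show φ (f (mpow u' (j.1 + 1))) = bB (some j)
        rw [hφu (j.1 + 1) (by omega), hbB]
    intro y
    exact LinearMap.congr_fun h1 y
  refine ⟨{ toFun := φ, map_smul' := φ.map_smul, map_zero' := φ.map_zero,
            map_add' := φ.map_add, map_mul' := hmul }, ?_, ?_, ?_⟩
  · exact Function.bijective_iff_has_inverse.mpr ⟨ψ, left, right⟩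
  · show φ (f u') = g uₖ
    exact hφu 1 le_rfl
  · show φ (f v') = g vₖ - g (mpow uₖ (k - 1))
    exact hφv
end
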